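/- For any set S of n ≥ 3 points in general position in the plane, Σ_{k=3}^{n} Σ_{ℓ=0}^{n−3} 2·cos((2k+ℓ)π/3) · X_{k,ℓ}(S) = binom(n,2) + n − 2 + 2·cos(nπ/3). -/

import Mathlib

open Finset
open scoped Classical

def GenPos (S : Finset (ℝ × ℝ)) : Prop :=
  ∀ T ⊆ S, T.card = 3 → ¬ Collinear ℝ (T : Set (ℝ × ℝ))

def ConvexPos (T : Finset (ℝ × ℝ)) : Prop :=
  ∀ p ∈ T, p ∉ convexHull ℝ ((T : Set (ℝ × ℝ)) \ {p})

/-- number of convex k-gons with vertices in S and exactly l points of S inside -/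
noncomputable def X (S : Finset (ℝ × ℝ)) (k l : ℕ) : ℕ :=
  ((Finset.powersetCard k S).filter (fun T => ConvexPos T ∧
    (S.filter (fun p => p ∈ interior (convexHull ℝ (T : Set (ℝ × ℝ))))).card = l)).card

/-- number of extreme points (convex hull vertices) of S -/
noncomputable def hullVerts (S : Finset (ℝ × ℝ)) : ℕ :=
  (S.filter (fun p => p ∉ convexHull ℝ ((S : Set (ℝ × ℝ)) \ {p}))).card

namespace Stmt18Aux

noncomputable def VV (A : Finset (ℝ × ℝ)) : Finset (ℝ × ℝ) :=
  A.filter (fun p => p ∉ convexHull ℝ ((A : Set (ℝ × ℝ)) \ {p}))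

lemma VV_subset (A : Finset (ℝ × ℝ)) : VV A ⊆ A := Finset.filter_subset _ _

lemma mem_VV {A : Finset (ℝ × ℝ)} {p} :
    p ∈ VV A ↔ p ∈ A ∧ p ∉ convexHull ℝ ((A : Set (ℝ × ℝ)) \ {p}) := Finset.mem_filter

lemma combo_mem {C : Set (ℝ × ℝ)} (hC : Convex ℝ C) {c₁ c₂ q : ℝ × ℝ} {α β : ℝ}
    (hα : 0 ≤ α) (hβ : 0 ≤ β) (h0 : 0 < α + β) (h₁ : c₁ ∈ C) (h₂ : c₂ ∈ C)
    (h : (α + β) • q = α • c₁ + β • c₂) : q ∈ C := by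
  have hne : α + β ≠ 0 := ne_of_gt h0
  have hq : q = (α / (α + β)) • c₁ + (β / (α + β)) • c₂ := by
    have h2 := congrArg (fun v : ℝ × ℝ => (α + β)⁻¹ • v) h
    simp only [smul_add, smul_smul, inv_mul_cancel₀ hne, one_smul] at h2
    rw [h2]
    rw [div_eq_inv_mul, div_eq_inv_mul]
  rw [hq]
  exact hC h₁ h₂ (div_nonneg hα h0.le) (div_nonneg hβ h0.le) (by field_simp)

lemma hull_eq_join {A : Finset (ℝ × ℝ)} {p : ℝ × ℝ} (hp : p ∈ A)
    (hne : ((A : Set (ℝ × ℝ)) \ {p}).Nonempty) :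
    convexHull ℝ (A : Set (ℝ × ℝ)) =
      convexJoin ℝ {p} (convexHull ℝ ((A : Set (ℝ × ℝ)) \ {p})) := by
  have e : (A : Set (ℝ × ℝ)) = insert p ((A : Set (ℝ × ℝ)) \ {p}) :=
    Set.ext fun x => by by_cases hx : x = p <;> simp [hx, hp]
  conv_lhs => rw [e]
  exact convexHull_insert hne

lemma exchange {A : Set (ℝ × ℝ)} {p q : ℝ × ℝ} (hpA : p ∈ A) (hqA : q ∈ A) (hpq : p ≠ q)
    (hp : p ∈ convexHull ℝ (A \ {p})) (hq : q ∈ convexHull ℝ (A \ {q})) :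
    q ∈ convexHull ℝ ((A \ {p}) \ {q}) := by
  set D : Set (ℝ × ℝ) := (A \ {p}) \ {q} with hD
  rcases D.eq_empty_or_nonempty with hDe | hDne
  · exfalso
    have hsub : A \ {q} ⊆ {p} := by
      intro x hx
      by_contra hxp
      have : x ∈ D := ⟨⟨hx.1, hxp⟩, hx.2⟩
      simp [hDe] at this
    have := convexHull_mono hsub hq
    rw [convexHull_singleton] at this
    exact hpq (this.symm)
  · have e1 : A \ {q} = insert p D := by
      ext x
      simp only [hD, Set.mem_diff, Set.mem_insert_iff, Set.mem_singleton_iff]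
      constructor
      · rintro ⟨hxA, hxq⟩
        by_cases hxp : x = p
        · exact Or.inl hxp
        · exact Or.inr ⟨⟨hxA, hxp⟩, hxq⟩
      · rintro (rfl | ⟨⟨h1, _⟩, h3⟩)
        · exact ⟨hpA, hpq⟩
        · exact ⟨h1, h3⟩
    have e2 : A \ {p} = insert q D := by
      ext x
      simp only [hD, Set.mem_diff, Set.mem_insert_iff, Set.mem_singleton_iff]
      constructor
      · rintro ⟨hxA, hxp⟩
        by_cases hxq : x = q
        · exact Or.inl hxq
        · exact Or.inr ⟨⟨hxA, hxp⟩, hxq⟩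
      · rintro (rfl | ⟨⟨h1, h2⟩, _⟩)
        · exact ⟨hqA, fun h => hpq h.symm⟩
        · exact ⟨h1, h2⟩
    rw [e1, convexHull_insert hDne, mem_convexJoin] at hq
    rw [e2, convexHull_insert hDne, mem_convexJoin] at hp
    obtain ⟨x, hx, c₁, hc₁, hseg₁⟩ := hq
    obtain ⟨y, hy, c₂, hc₂, hseg₂⟩ := hp
    rw [Set.mem_singleton_iff] at hx hy
    rw [hx] at hseg₁
    rw [hy] at hseg₂
    obtain ⟨a, b, ha, hb, hab, hq'⟩ := hseg₁
    obtain ⟨a', b', ha', hb', hab', hp'⟩ := hseg₂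
    -- hq' : a • p + b • c₁ = q ;  hp' : a' • q + b' • c₂ = p
    have key : (a * b' + b) • q = (a * b') • c₂ + b • c₁ := by
      have h4 : a * b' + b = 1 - a * a' := by nlinarith
      rw [h4]
      linear_combination (norm := module) -hq' - a • hp'
    have hpos : 0 < a * b' + b := by
      rcases lt_or_eq_of_le (by positivity : (0:ℝ) ≤ a * b' + b) with h | h
      · exact h
      · exfalso
        have hb0 : b = 0 := by nlinarith
        have hab0 : a = 1 := by linarith
        have hbp0 : a * b' = 0 := by linarith
        have hb'0 : b' = 0 := by rw [hab0] at hbp0; linarith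
        have ha'1 : a' = 1 := by linarith
        rw [hb0, hab0, one_smul, zero_smul, add_zero] at hq'
        exact hpq hq'
    exact combo_mem (convex_convexHull ℝ D) (by positivity) hb hpos hc₂ hc₁ key

lemma extreme_not_interior {A : Finset (ℝ × ℝ)} {p r : ℝ × ℝ} (hpA : p ∈ A) (hrA : r ∈ A)
    (hrp : r ≠ p) (hext : p ∉ convexHull ℝ ((A : Set (ℝ × ℝ)) \ {p})) :
    p ∉ interior (convexHull ℝ (A : Set (ℝ × ℝ))) := by
  intro hint
  have hne : ((A : Set (ℝ × ℝ)) \ {p}).Nonempty := ⟨r, Set.mem_diff_singleton.2 ⟨Finset.mem_coe.2 hrA, hrp⟩⟩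
  obtain ⟨δ, hδ, hball⟩ := Metric.isOpen_iff.1 isOpen_interior p hint
  set d : ℝ × ℝ := p - r with hdd
  have hd : d ≠ 0 := sub_ne_zero.2 (Ne.symm hrp)
  have hnd : (0:ℝ) < ‖d‖ := norm_pos_iff.2 hd
  set ε : ℝ := δ / (2 * ‖d‖) with hεd
  have hε : 0 < ε := div_pos hδ (by positivity)
  set p' : ℝ × ℝ := p + ε • d with hp'd
  have hp' : p' ∈ convexHull ℝ (A : Set (ℝ × ℝ)) := by
    refine interior_subset (hball ?_)
    have : dist p' p = ε * ‖d‖ := by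
      rw [hp'd, dist_eq_norm]
      simp [norm_smul, abs_of_pos hε]
    rw [Metric.mem_ball, this, hεd]
    have h5 : δ / (2 * ‖d‖) * ‖d‖ = δ / 2 := by field_simp
    rw [h5]
    linarith
  rw [hull_eq_join hpA hne, mem_convexJoin] at hp'
  obtain ⟨x, hx, z, hz, hseg⟩ := hp'
  rw [Set.mem_singleton_iff] at hx
  rw [hx] at hseg
  obtain ⟨a, b, ha, hb, hab, habz⟩ := hseg
  apply hext
  have hrmem : r ∈ convexHull ℝ ((A : Set (ℝ × ℝ)) \ {p}) :=
    subset_convexHull ℝ _ (Set.mem_diff_singleton.2 ⟨Finset.mem_coe.2 hrA, hrp⟩)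
  refine combo_mem (convex_convexHull ℝ _) hε.le hb (by positivity) hrmem hz ?_
  -- (ε + b) • p = ε • r + b • z
  have h' : (1 - b) • p + b • z = p + ε • (p - r) := by
    rw [show (1 : ℝ) - b = a by linarith]
    exact habz
  linear_combination (norm := module) -h'

lemma convex_hull_remove {T : Finset (ℝ × ℝ)} {p : ℝ × ℝ} (hp : p ∈ T)
    (hext : p ∉ convexHull ℝ ((T : Set (ℝ × ℝ)) \ {p}))
    (hne : ((T : Set (ℝ × ℝ)) \ {p}).Nonempty) :
    Convex ℝ (convexHull ℝ (T : Set (ℝ × ℝ)) \ {p}) := by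
  intro x hx y hy a b ha hb hab
  refine ⟨(convex_convexHull ℝ _) hx.1 hy.1 ha hb hab, ?_⟩
  intro hcon
  rw [Set.mem_singleton_iff] at hcon
  -- hcon : a • x + b • y = p
  rcases eq_or_lt_of_le ha with rfl | ha'
  · rw [zero_smul, zero_add] at hcon
    rw [zero_add] at hab
    rw [hab, one_smul] at hcon
    exact hy.2 (Set.mem_singleton_iff.2 hcon)
  rcases eq_or_lt_of_le hb with rfl | hb'
  · rw [zero_smul, add_zero] at hcon
    rw [add_zero] at hab
    rw [hab, one_smul] at hcon
    exact hx.2 (Set.mem_singleton_iff.2 hcon)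
  have hx' := hx.1
  have hy' := hy.1
  rw [hull_eq_join hp hne, mem_convexJoin] at hx' hy'
  obtain ⟨x₀, hx₀, c₁, hc₁, hseg₁⟩ := hx'
  obtain ⟨y₀, hy₀, c₂, hc₂, hseg₂⟩ := hy'
  rw [Set.mem_singleton_iff] at hx₀ hy₀
  rw [hx₀] at hseg₁; rw [hy₀] at hseg₂
  obtain ⟨u₁, v₁, hu₁, hv₁, huv₁, hxe⟩ := hseg₁
  obtain ⟨u₂, v₂, hu₂, hv₂, huv₂, hye⟩ := hseg₂
  -- hxe : u₁ • p + v₁ • c₁ = x, hye : u₂ • p + v₂ • c₂ = y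
  have hv₁' : 0 < v₁ := by
    rcases eq_or_lt_of_le hv₁ with rfl | h
    · exfalso
      rw [zero_smul, add_zero] at hxe
      rw [add_zero] at huv₁
      rw [huv₁, one_smul] at hxe
      exact hx.2 (Set.mem_singleton_iff.2 hxe.symm)
    · exact h
  have hv₂' : 0 < v₂ := by
    rcases eq_or_lt_of_le hv₂ with rfl | h
    · exfalso
      rw [zero_smul, add_zero] at hye
      rw [add_zero] at huv₂
      rw [huv₂, one_smul] at hye
      exact hy.2 (Set.mem_singleton_iff.2 hye.symm)
    · exact h
  apply hext
  have hpos : 0 < a * v₁ + b * v₂ := by positivity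
  refine combo_mem (convex_convexHull ℝ _) (by positivity) (by positivity) hpos hc₁ hc₂ ?_
  -- (a*v₁ + b*v₂) • p = (a*v₁) • c₁ + (b*v₂) • c₂
  have h4 : u₁ = 1 - v₁ := by linarith
  have h5 : u₂ = 1 - v₂ := by linarith
  have h6 : b = 1 - a := by linarith
  rw [h4] at hxe; rw [h5] at hye; rw [h6] at hcon ⊢
  linear_combination (norm := module) -(a • hxe) - (1 - a) • hye - hcon

lemma hull_VV (A : Finset (ℝ × ℝ)) : convexHull ℝ (↑(VV A) : Set (ℝ × ℝ)) = convexHull ℝ ↑A := by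
  induction A using Finset.strongInduction with
  | _ A ih =>
    by_cases h : ∀ p ∈ A, p ∉ convexHull ℝ ((A : Set (ℝ × ℝ)) \ {p})
    · have : VV A = A := Finset.filter_eq_self.2 h
      rw [this]
    · push_neg at h
      obtain ⟨p, hpA, hp⟩ := h
      have hsub : A.erase p ⊂ A := Finset.erase_ssubset hpA
      have ecoe : ((A.erase p : Finset (ℝ × ℝ)) : Set (ℝ × ℝ)) = (A : Set (ℝ × ℝ)) \ {p} :=
        Finset.coe_erase p A
      have e1 : convexHull ℝ ((A.erase p : Finset (ℝ × ℝ)) : Set (ℝ × ℝ)) =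
          convexHull ℝ (A : Set (ℝ × ℝ)) := by
        rw [ecoe]
        apply Set.Subset.antisymm (convexHull_mono Set.diff_subset)
        apply convexHull_min _ (convex_convexHull ℝ _)
        intro x hxA
        by_cases hxp : x = p
        · rw [hxp]; exact hp
        · exact subset_convexHull ℝ ((A : Set (ℝ × ℝ)) \ {p}) ⟨hxA, hxp⟩
      have e2 : VV (A.erase p) = VV A := by
        ext q
        simp only [mem_VV, Finset.mem_erase, ecoe]
        constructor
        · rintro ⟨⟨hqp, hqA⟩, hq⟩
          refine ⟨hqA, ?_⟩
          intro hmem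
          exact hq (exchange hpA hqA (fun hh => hqp hh.symm) hp hmem)
        · rintro ⟨hqA, hq⟩
          have hqp : q ≠ p := by
            rintro rfl
            exact hq hp
          refine ⟨⟨hqp, hqA⟩, ?_⟩
          intro hmem
          have hsub2 : ((A : Set (ℝ × ℝ)) \ {p}) \ {q} ⊆ (A : Set (ℝ × ℝ)) \ {q} :=
            fun x hx => ⟨hx.1.1, hx.2⟩
          exact hq (convexHull_mono hsub2 hmem)
      rw [← e2, ih (A.erase p) hsub, e1]

lemma not_collinear_of_genpos {S A : Finset (ℝ × ℝ)} (hgp : GenPos S) (hA : A ⊆ S)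
    (hcard : 3 ≤ A.card) : ¬ Collinear ℝ (A : Set (ℝ × ℝ)) := by
  intro hcol
  obtain ⟨T, hTA, hT3⟩ := Finset.exists_subset_card_eq hcard
  exact hgp T (hTA.trans hA) hT3 (Collinear.subset (Finset.coe_subset.2 hTA) hcol)

lemma finrank_plane : Module.finrank ℝ (ℝ × ℝ) = 2 := by
  simp [Module.finrank_prod]

lemma span_top_of_not_collinear {s : Set (ℝ × ℝ)} (h : ¬ Collinear ℝ s) :
    affineSpan ℝ s = ⊤ := by
  by_contra hne
  apply h
  have hsne : s.Nonempty := by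
    rcases s.eq_empty_or_nonempty with rfl | h'
    · exact absurd (collinear_empty ℝ _) h
    · exact h'
  rw [collinear_iff_finrank_le_one]
  have hvs : vectorSpan ℝ s ≠ ⊤ := fun h' =>
    hne ((AffineSubspace.affineSpan_eq_top_iff_vectorSpan_eq_top_of_nonempty ℝ (ℝ × ℝ) (ℝ × ℝ) hsne).2 h')
  have hlt := Submodule.finrank_lt hvs
  rw [finrank_plane] at hlt
  omega

lemma not_collinear_of_span_top {s : Set (ℝ × ℝ)} (h : affineSpan ℝ s = ⊤) :
    ¬ Collinear ℝ s := by
  intro hcol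
  have h1 : Module.finrank ℝ (vectorSpan ℝ s) ≤ 1 := Collinear.finrank_le_one hcol
  have h2 : vectorSpan ℝ s = ⊤ := AffineSubspace.vectorSpan_eq_top_of_affineSpan_eq_top ℝ (ℝ × ℝ) (ℝ × ℝ) h
  rw [h2, finrank_top, finrank_plane] at h1
  omega

lemma span_VV_top {S A : Finset (ℝ × ℝ)} (hgp : GenPos S) (hA : A ⊆ S) (hcard : 3 ≤ A.card) :
    affineSpan ℝ ((VV A : Finset (ℝ × ℝ)) : Set (ℝ × ℝ)) = ⊤ := by
  have e : affineSpan ℝ ((VV A : Finset (ℝ × ℝ)) : Set (ℝ × ℝ)) =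
      affineSpan ℝ (A : Set (ℝ × ℝ)) := by
    rw [← affineSpan_convexHull ((VV A : Finset (ℝ × ℝ)) : Set (ℝ × ℝ)), hull_VV A,
      affineSpan_convexHull]
  rw [e]
  exact span_top_of_not_collinear (not_collinear_of_genpos hgp hA hcard)

lemma card_VV {S A : Finset (ℝ × ℝ)} (hgp : GenPos S) (hA : A ⊆ S) (hcard : 3 ≤ A.card) :
    3 ≤ (VV A).card := by
  by_contra hlt
  push_neg at hlt
  have h2 : (VV A).card ≤ 2 := by omega
  obtain ⟨t, hsub, ht⟩ := Infinite.exists_superset_card_eq (VV A) 2 h2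
  obtain ⟨a, b, _hab, rfl⟩ := Finset.card_eq_two.1 ht
  have hcol : Collinear ℝ ((VV A : Finset (ℝ × ℝ)) : Set (ℝ × ℝ)) := by
    refine Collinear.subset ?_ (collinear_pair ℝ a b)
    intro x hx
    have := hsub (Finset.mem_coe.1 hx)
    simpa using this
  exact not_collinear_of_span_top (span_VV_top hgp hA hcard) hcol

lemma convexPos_VV (A : Finset (ℝ × ℝ)) : ConvexPos (VV A) := by
  intro p hp hmem
  have h1 := (mem_VV.1 hp).2
  have hsub : ((VV A : Finset (ℝ × ℝ)) : Set (ℝ × ℝ)) \ {p} ⊆ (A : Set (ℝ × ℝ)) \ {p} :=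
    fun x hx => ⟨Finset.mem_coe.2 (VV_subset A (Finset.mem_coe.1 hx.1)), hx.2⟩
  exact h1 (convexHull_mono hsub hmem)

lemma collinear_level {f : (ℝ × ℝ) →L[ℝ] ℝ} {u v : ℝ × ℝ} (huv : f u < f v) (c : ℝ) :
    Collinear ℝ {x : ℝ × ℝ | f x = c} := by
  set a := f (1, 0) with ha
  set b := f (0, 1) with hb
  have hrep : ∀ x : ℝ × ℝ, f x = x.1 * a + x.2 * b := by
    intro x
    have hx : x = x.1 • ((1:ℝ), (0:ℝ)) + x.2 • ((0:ℝ), (1:ℝ)) := by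
      apply Prod.ext <;> simp
    calc f x = f (x.1 • ((1:ℝ), (0:ℝ)) + x.2 • ((0:ℝ), (1:ℝ))) := by rw [← hx]
    _ = x.1 * a + x.2 * b := by rw [map_add, map_smul, map_smul, smul_eq_mul, smul_eq_mul]
  have habne : a ≠ 0 ∨ b ≠ 0 := by
    by_contra hcon
    push_neg at hcon
    have hz : ∀ x : ℝ × ℝ, f x = 0 := fun x => by rw [hrep x, hcon.1, hcon.2]; ring
    rw [hz u, hz v] at huv
    exact lt_irrefl _ huv
  rcases Set.eq_empty_or_nonempty {x : ℝ × ℝ | f x = c} with he | ⟨q, hq⟩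
  · rw [he]; exact collinear_empty ℝ _
  · rw [collinear_iff_of_mem hq]
    refine ⟨(-b, a), ?_⟩
    intro p hp
    rw [Set.mem_setOf_eq] at hp hq
    have hp' : (p.1 - q.1) * a + (p.2 - q.2) * b = 0 := by
      have h1 := hrep p
      have h2 := hrep q
      linear_combination -h1 + h2 + hp - hq
    by_cases hA : a = 0
    · have hbne : b ≠ 0 := by tauto
      have hv2 : p.2 - q.2 = 0 := by
        rw [hA] at hp'
        have : (p.2 - q.2) * b = 0 := by linarith
        rcases mul_eq_zero.1 this with h | h
        · exact h
        · exact absurd h hbne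
      refine ⟨-(p.1 - q.1)/b, ?_⟩
      apply Prod.ext
      · simp only [Prod.smul_fst, vadd_eq_add, Prod.fst_add, smul_eq_mul]
        field_simp
        ring
      · simp only [Prod.smul_snd, vadd_eq_add, Prod.snd_add, smul_eq_mul]
        rw [hA]
        have : p.2 = q.2 := by linarith
        rw [this]; ring
    · refine ⟨(p.2 - q.2)/a, ?_⟩
      apply Prod.ext
      · simp only [Prod.smul_fst, vadd_eq_add, Prod.fst_add, smul_eq_mul]
        field_simp
        linarith [hp']
      · simp only [Prod.smul_snd, vadd_eq_add, Prod.snd_add, smul_eq_mul]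
        field_simp
        ring

lemma mem_interior_hullVV {S A : Finset (ℝ × ℝ)} (hgp : GenPos S) (hA : A ⊆ S)
    (hcard : 3 ≤ A.card) {q : ℝ × ℝ} (hqA : q ∈ A) (hq : q ∉ VV A) :
    q ∈ interior (convexHull ℝ ((VV A : Finset (ℝ × ℝ)) : Set (ℝ × ℝ))) := by
  set C := convexHull ℝ ((VV A : Finset (ℝ × ℝ)) : Set (ℝ × ℝ)) with hCdef
  have hCconv : Convex ℝ C := convex_convexHull ℝ _
  have hCA : C = convexHull ℝ (A : Set (ℝ × ℝ)) := hull_VV A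
  have hqC : q ∈ C := by
    rw [hCA]
    exact subset_convexHull ℝ _ (Finset.mem_coe.2 hqA)
  by_contra hqi
  obtain ⟨f, hf⟩ := geometric_hahn_banach_open_point (hCconv.interior) isOpen_interior hqi
  have hint : (interior C).Nonempty :=
    interior_convexHull_nonempty_iff_affineSpan_eq_top.2 (span_VV_top hgp hA hcard)
  obtain ⟨w0, hw0⟩ := hint
  have hw0lt : f w0 < f q := hf w0 hw0
  have hle : ∀ x ∈ C, f x ≤ f q := by
    intro x hx
    by_contra hgt
    push_neg at hgt
    have hxw : (0:ℝ) < f x - f w0 := by linarith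
    set t : ℝ := (f x - f q)/(2 * (f x - f w0)) with htdef
    have hfxq : (0:ℝ) < f x - f q := by linarith
    have ht0 : 0 < t := by positivity
    have ht1 : t < 1 := by
      rw [htdef, div_lt_one (by positivity)]
      linarith
    have hmem : (1 - t) • x + t • w0 ∈ interior C :=
      hCconv.combo_self_interior_mem_interior hx hw0 (by linarith) ht0 (by ring)
    have hlt2 := hf _ hmem
    rw [map_add, map_smul, map_smul, smul_eq_mul, smul_eq_mul] at hlt2
    have he : t * (f x - f w0) = (f x - f q)/2 := by
      rw [htdef]; field_simp
    nlinarith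
  rw [hCdef, Finset.convexHull_eq] at hqC
  obtain ⟨w, hw0', hw1, hwq⟩ := hqC
  set W := (VV A).filter (fun v => f v = f q) with hWdef
  have hzero : ∀ v ∈ VV A, v ∉ W → w v = 0 := by
    have e2 : ∑ v ∈ VV A, w v * f v = f q := by
      have hcm := hwq
      rw [Finset.centerMass_eq_of_sum_1 _ _ hw1] at hcm
      have hfc := congrArg f hcm
      rw [map_sum] at hfc
      simp only [id_eq, map_smul, smul_eq_mul] at hfc
      exact hfc
    have e1 : ∑ v ∈ VV A, w v * f q = f q := by rw [← Finset.sum_mul, hw1, one_mul]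
    have hsum : ∑ v ∈ VV A, w v * (f q - f v) = 0 := by
      simp only [mul_sub]
      rw [Finset.sum_sub_distrib, e1, e2, sub_self]
    have hnn : ∀ v ∈ VV A, 0 ≤ w v * (f q - f v) := fun v hv =>
      mul_nonneg (hw0' v hv)
        (sub_nonneg.2 (hle v (subset_convexHull ℝ _ (Finset.mem_coe.2 hv))))
    intro v hv hvW
    have hz := (Finset.sum_eq_zero_iff_of_nonneg hnn).1 hsum v hv
    have hfv : ¬ (f v = f q) := by
      intro hfeq
      exact hvW (Finset.mem_filter.2 ⟨hv, hfeq⟩)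
    rcases mul_eq_zero.1 hz with h | h
    · exact h
    · exact absurd (sub_eq_zero.1 h).symm hfv
  have hWsum : ∑ v ∈ W, w v = 1 := by
    rw [← hw1]
    exact Finset.sum_subset (Finset.filter_subset _ _) hzero
  have hqW : q ∈ convexHull ℝ ((W : Finset (ℝ × ℝ)) : Set (ℝ × ℝ)) := by
    rw [Finset.convexHull_eq]
    refine ⟨w, fun y hy => hw0' y (Finset.filter_subset _ _ hy), hWsum, ?_⟩
    rw [Finset.centerMass_eq_of_sum_1 _ _ hWsum]
    rw [Finset.centerMass_eq_of_sum_1 _ _ hw1] at hwq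
    rw [← hwq]
    apply Finset.sum_subset (Finset.filter_subset _ _)
    intro v hv hvW
    rw [hzero v hv hvW, zero_smul]
  have hWsub : W ⊆ VV A := Finset.filter_subset _ _
  have hqnotW : q ∉ W := fun h => hq (hWsub h)
  by_cases hWcard : 2 ≤ W.card
  · obtain ⟨a, ha, b, hb, hab⟩ := Finset.one_lt_card.1 (by omega : 1 < W.card)
    set T3 : Finset (ℝ × ℝ) := {a, b, q} with hT3
    have hbq : b ≠ q := fun h => hqnotW (h ▸ hb)
    have haq : a ≠ q := fun h => hqnotW (h ▸ ha)
    have hT3S : T3 ⊆ S := by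
      intro x hx
      rw [hT3] at hx
      simp only [Finset.mem_insert, Finset.mem_singleton] at hx
      rcases hx with rfl | rfl | rfl
      · exact hA (VV_subset A (hWsub ha))
      · exact hA (VV_subset A (hWsub hb))
      · exact hA hqA
    have hT3card : T3.card = 3 := by
      rw [hT3]
      rw [Finset.card_insert_of_notMem (by simp [hab, haq]),
        Finset.card_insert_of_notMem (by simp [hbq]), Finset.card_singleton]
    have hcol3 : Collinear ℝ ((T3 : Finset (ℝ × ℝ)) : Set (ℝ × ℝ)) := by
      refine Collinear.subset ?_ (collinear_level hw0lt (f q))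
      intro x hx
      rw [hT3] at hx
      simp only [Finset.coe_insert, Set.mem_insert_iff, Finset.coe_singleton,
        Set.mem_singleton_iff] at hx
      rcases hx with rfl | rfl | rfl
      · exact (Finset.mem_filter.1 ha).2
      · exact (Finset.mem_filter.1 hb).2
      · rfl
    exact hgp T3 hT3S hT3card hcol3
  · push_neg at hWcard
    have hWne : W.Nonempty := by
      by_contra hW0
      rw [Finset.not_nonempty_iff_eq_empty] at hW0
      rw [hW0] at hqW
      simp at hqW
    have hW1 : W.card = 1 := by
      have := Finset.card_pos.2 hWne
      omega
    obtain ⟨v0, hv0⟩ := Finset.card_eq_one.1 hW1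
    rw [hv0] at hqW
    simp only [Finset.coe_singleton, convexHull_singleton, Set.mem_singleton_iff] at hqW
    apply hqnotW
    rw [hv0, hqW]
    exact Finset.mem_singleton_self v0

lemma VV_union {S T B : Finset (ℝ × ℝ)} (hTS : T ⊆ S) (hcard : 3 ≤ T.card)
    (hcp : ConvexPos T)
    (hB : B ⊆ S.filter (fun p => p ∈ interior (convexHull ℝ (T : Set (ℝ × ℝ))))) :
    VV (T ∪ B) = T := by
  have hTnotint : ∀ p ∈ T, p ∉ interior (convexHull ℝ (T : Set (ℝ × ℝ))) := by
    intro p hp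
    obtain ⟨r, hr, hrp⟩ := Finset.exists_mem_ne (show 1 < T.card by omega) p
    exact extreme_not_interior hp hr hrp (hcp p hp)
  have hBint : ∀ b ∈ B, b ∈ interior (convexHull ℝ (T : Set (ℝ × ℝ))) := fun b hb =>
    (Finset.mem_filter.1 (hB hb)).2
  have hBT : ∀ b ∈ B, b ∉ T := fun b hb hbT => hTnotint b hbT (hBint b hb)
  ext x
  rw [mem_VV]
  constructor
  · rintro ⟨hxU, hxh⟩
    rcases Finset.mem_union.1 hxU with h | h
    · exact h
    · exfalso
      apply hxh
      have hTsub : (T : Set (ℝ × ℝ)) ⊆ ((T ∪ B : Finset (ℝ × ℝ)) : Set (ℝ × ℝ)) \ {x} := by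
        intro y hy
        refine ⟨?_, ?_⟩
        · rw [Finset.coe_union]; exact Or.inl hy
        · intro hyx
          have hyx' : y = x := hyx
          exact hBT x h (Finset.mem_coe.1 (hyx' ▸ hy))
      exact convexHull_mono hTsub (interior_subset (hBint x h))
  · intro hxT
    refine ⟨Finset.mem_union_left _ hxT, ?_⟩
    have hne : ((T : Set (ℝ × ℝ)) \ {x}).Nonempty := by
      obtain ⟨r, hr, hrp⟩ := Finset.exists_mem_ne (by omega : 1 < T.card) x
      exact ⟨r, Finset.mem_coe.2 hr, hrp⟩
    have hD : Convex ℝ (convexHull ℝ (T : Set (ℝ × ℝ)) \ {x}) :=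
      convex_hull_remove hxT (hcp x hxT) hne
    intro hmem
    have hsub : ((T ∪ B : Finset (ℝ × ℝ)) : Set (ℝ × ℝ)) \ {x} ⊆
        convexHull ℝ (T : Set (ℝ × ℝ)) \ {x} := by
      rintro y ⟨hy, hyx⟩
      rw [Finset.coe_union] at hy
      refine ⟨?_, hyx⟩
      rcases hy with h | h
      · exact subset_convexHull ℝ _ h
      · exact interior_subset (hBint y (Finset.mem_coe.1 h))
    exact (convexHull_min hsub hD hmem).2 rfl

lemma fiber_eq {S T : Finset (ℝ × ℝ)} (hgp : GenPos S) (hTS : T ⊆ S) (hcard : 3 ≤ T.card)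
    (hcp : ConvexPos T) :
    ((S.powerset.filter (fun A => 3 ≤ A.card)).filter (fun A => VV A = T))
      = ((S.filter (fun p => p ∈ interior (convexHull ℝ (T : Set (ℝ × ℝ))))).powerset).image
          (fun B => T ∪ B) := by
  ext A
  simp only [Finset.mem_filter, Finset.mem_powerset, Finset.mem_image]
  constructor
  · rintro ⟨⟨hAS, hA3⟩, hVVA⟩
    refine ⟨A \ T, ?_, ?_⟩
    · intro x hx
      rw [Finset.mem_sdiff] at hx
      rw [Finset.mem_filter]
      refine ⟨hAS hx.1, ?_⟩
      have := mem_interior_hullVV hgp hAS hA3 hx.1 (by rw [hVVA]; exact hx.2)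
      rwa [hVVA] at this
    · rw [← hVVA]
      exact Finset.union_sdiff_of_subset (VV_subset A)
  · rintro ⟨B, hBsub, rfl⟩
    have hUS : T ∪ B ⊆ S := Finset.union_subset hTS (hBsub.trans (Finset.filter_subset _ _))
    refine ⟨⟨hUS, le_trans hcard (Finset.card_le_card Finset.subset_union_left)⟩, ?_⟩
    exact VV_union hTS hcard hcp hBsub

lemma disjoint_TB {S T : Finset (ℝ × ℝ)} (hcard : 3 ≤ T.card) (hcp : ConvexPos T) :
    Disjoint T (S.filter (fun p => p ∈ interior (convexHull ℝ (T : Set (ℝ × ℝ))))) := by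
  rw [Finset.disjoint_left]
  intro p hp hpI
  obtain ⟨r, hr, hrp⟩ := Finset.exists_mem_ne (show 1 < T.card by omega) p
  exact extreme_not_interior hp hr hrp (hcp p hp) (Finset.mem_filter.1 hpI).2

noncomputable def om : ℂ := (1/2 : ℂ) + ((Real.sqrt 3 / 2 : ℝ) : ℂ) * Complex.I

lemma omega_id : 1 + om^2 = om := by
  have hs3 : ((Real.sqrt 3 : ℝ) : ℂ)^2 = 3 := by
    norm_cast
    rw [Real.sq_sqrt]
    norm_num
  have hI : Complex.I^2 = -1 := Complex.I_sq
  rw [om]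
  push_cast
  linear_combination (Complex.I^2/4) * hs3 + (3/4) * hI

lemma omega_exp : om = Complex.exp (((Real.pi/3 : ℝ) : ℂ) * Complex.I) := by
  rw [Complex.exp_mul_I]
  rw [← Complex.ofReal_cos, ← Complex.ofReal_sin]
  rw [Real.cos_pi_div_three, Real.sin_pi_div_three]
  rw [om]
  push_cast
  ring

lemma omega_pow_re (m : ℕ) : (om^m).re = Real.cos (m * Real.pi / 3) := by
  rw [omega_exp, ← Complex.exp_nat_mul]
  have h : (m : ℂ) * (((Real.pi/3 : ℝ) : ℂ) * Complex.I)
      = ((m * Real.pi / 3 : ℝ) : ℂ) * Complex.I := by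
    push_cast
    ring
  rw [h, Complex.exp_ofReal_mul_I_re]

lemma omega_sq : om^2 = om - 1 := by linear_combination omega_id

lemma omega_four : om^4 = -om := by linear_combination (om^2 + om) * omega_sq

lemma omega_re : om.re = 1/2 := by
  rw [om]
  simp

lemma sum_pow_card (s : Finset (ℝ × ℝ)) (x : ℂ) :
    ∑ B ∈ s.powerset, x^B.card = (1+x)^s.card := by
  rw [Finset.sum_powerset_apply_card (fun m => x^m)]
  rw [add_comm (1:ℂ) x, add_pow]
  apply Finset.sum_congr rfl
  intro j _
  simp only [nsmul_eq_mul, one_pow, mul_one]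
  ring

section Main

lemma master2 {S : Finset (ℝ × ℝ)} (hn : 3 ≤ S.card) :
    ∑ A ∈ S.powerset.filter (fun A => 3 ≤ A.card), om^(2*A.card)
      = om^S.card - 1 - S.card*om^2 - (S.card.choose 2 : ℂ)*om^4 := by
  classical
  have htot : ∑ A ∈ S.powerset, (om^2)^A.card = (1+om^2)^S.card := sum_pow_card S (om^2)
  have hsplit := Finset.sum_filter_add_sum_filter_not S.powerset (fun A => 3 ≤ A.card)
    (fun A => (om^2)^A.card)
  have hsmall : ∑ A ∈ S.powerset.filter (fun A => ¬ 3 ≤ A.card), (om^2)^A.card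
      = 1 + S.card*om^2 + (S.card.choose 2 : ℂ)*om^4 := by
    have hm : ∀ A ∈ S.powerset.filter (fun A => ¬ 3 ≤ A.card), A.card ∈ Finset.range 3 := by
      intro A hA
      rw [Finset.mem_filter] at hA
      rw [Finset.mem_range]
      omega
    have hf := Finset.sum_fiberwise_of_maps_to hm (fun A => (om^2)^A.card)
    rw [← hf]
    have hfib : ∀ j, j < 3 → (S.powerset.filter (fun A => ¬ 3 ≤ A.card)).filter
        (fun A => A.card = j) = Finset.powersetCard j S := by
      intro j hj
      ext A
      simp only [Finset.mem_filter, Finset.mem_powerset, Finset.mem_powersetCard]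
      constructor
      · rintro ⟨⟨h1, _⟩, h3⟩
        exact ⟨h1, h3⟩
      · rintro ⟨h1, h3⟩
        exact ⟨⟨h1, by omega⟩, h3⟩
    have hconst : ∀ j, j < 3 → ∑ A ∈ (S.powerset.filter (fun A => ¬ 3 ≤ A.card)).filter
        (fun A => A.card = j), (om^2)^A.card = (S.card.choose j : ℂ) * (om^2)^j := by
      intro j hj
      rw [hfib j hj]
      rw [Finset.sum_congr rfl (fun A hA => by
        rw [(Finset.mem_powersetCard.1 hA).2])]
      rw [Finset.sum_const, Finset.card_powersetCard, nsmul_eq_mul]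
    rw [Finset.sum_range_succ, Finset.sum_range_succ, Finset.sum_range_one]
    rw [hconst 0 (by omega), hconst 1 (by omega), hconst 2 (by omega)]
    simp only [Nat.choose_zero_right, Nat.choose_one_right, pow_zero, pow_one, Nat.cast_one]
    ring
  have hP2 : ∑ A ∈ S.powerset.filter (fun A => 3 ≤ A.card), om^(2*A.card)
      = ∑ A ∈ S.powerset.filter (fun A => 3 ≤ A.card), (om^2)^A.card := by
    apply Finset.sum_congr rfl
    intro A _
    rw [pow_mul]
  rw [hP2]
  have : ∑ A ∈ S.powerset.filter (fun A => 3 ≤ A.card), (om^2)^A.card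
      = (1+om^2)^S.card - (1 + S.card*om^2 + (S.card.choose 2 : ℂ)*om^4) := by
    rw [← htot, ← hsplit, hsmall]
    ring
  rw [this, omega_id]
  ring

open Real in
theorem stmt18' (S : Finset (ℝ × ℝ)) (hgp : GenPos S) (hn : 3 ≤ S.card) :
    ∑ k ∈ Finset.Icc 3 S.card, ∑ l ∈ Finset.range (S.card - 2),
      2 * Real.cos ((2 * k + l) * π / 3) * X S k l =
    (S.card.choose 2 : ℝ) + S.card - 2 + 2 * Real.cos (S.card * π / 3) := by
  classical
  set n := S.card with hndef
  set Q : Finset (Finset (ℝ × ℝ)) := S.powerset.filter (fun T => ConvexPos T ∧ 3 ≤ T.card)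
    with hQ
  set P : Finset (Finset (ℝ × ℝ)) := S.powerset.filter (fun A => 3 ≤ A.card) with hP
  have hQmem : ∀ T ∈ Q, T ⊆ S ∧ ConvexPos T ∧ 3 ≤ T.card := by
    intro T hT
    rw [hQ, Finset.mem_filter, Finset.mem_powerset] at hT
    exact ⟨hT.1, hT.2.1, hT.2.2⟩
  set iC : Finset (ℝ × ℝ) → ℕ := fun T =>
    (S.filter (fun p => p ∈ interior (convexHull ℝ (T : Set (ℝ × ℝ))))).card with hiC
  -- Step 1: fiberwise over VV
  have hmaps : ∀ A ∈ P, VV A ∈ Q := by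
    intro A hA
    rw [hP, Finset.mem_filter, Finset.mem_powerset] at hA
    rw [hQ, Finset.mem_filter, Finset.mem_powerset]
    exact ⟨Finset.Subset.trans (VV_subset A) hA.1, convexPos_VV A, card_VV hgp hA.1 hA.2⟩
  have step1 : ∑ T ∈ Q, ∑ A ∈ P.filter (fun A => VV A = T), om^(2*A.card)
      = ∑ A ∈ P, om^(2*A.card) := Finset.sum_fiberwise_of_maps_to hmaps _
  have step2 : ∀ T ∈ Q, ∑ A ∈ P.filter (fun A => VV A = T), om^(2*A.card)
      = om^(2*T.card + iC T) := by
    intro T hT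
    obtain ⟨hTS, hcp, hc3⟩ := hQmem T hT
    rw [hP, fiber_eq hgp hTS hc3 hcp]
    rw [Finset.sum_image (by
      intro B₁ h₁ B₂ h₂ heq
      rw [Finset.mem_coe, Finset.mem_powerset] at h₁ h₂
      have hd := disjoint_TB (S := S) hc3 hcp
      have e1 : B₁ = (T ∪ B₁) \ T := (Finset.union_sdiff_cancel_left (hd.mono_right h₁)).symm
      have e2 : B₂ = (T ∪ B₂) \ T := (Finset.union_sdiff_cancel_left (hd.mono_right h₂)).symm
      rw [e1, e2, show T ∪ B₁ = T ∪ B₂ from heq])]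
    have hterm : ∀ B ∈ (S.filter (fun p => p ∈ interior (convexHull ℝ
        (T : Set (ℝ × ℝ))))).powerset, om^(2*(T ∪ B).card) = (om^2)^T.card * (om^2)^B.card := by
      intro B hB
      rw [Finset.mem_powerset] at hB
      have hd := disjoint_TB (S := S) hc3 hcp
      rw [Finset.card_union_of_disjoint (hd.mono_right hB)]
      rw [Nat.mul_add, pow_add, pow_mul, pow_mul]
    rw [Finset.sum_congr rfl hterm, ← Finset.mul_sum, sum_pow_card, omega_id, pow_add, pow_mul]
  have master1 : ∑ A ∈ P, om^(2*A.card) = ∑ T ∈ Q, om^(2*T.card + iC T) := by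
    rw [← step1]
    exact Finset.sum_congr rfl step2
  -- Step 3: fiberwise over (card, iC)
  have hmaps2 : ∀ T ∈ Q, (T.card, iC T) ∈ (Finset.Icc 3 n) ×ˢ (Finset.range (n-2)) := by
    intro T hT
    obtain ⟨hTS, hcp, hc3⟩ := hQmem T hT
    rw [Finset.mem_product, Finset.mem_Icc, Finset.mem_range]
    have hcle : T.card ≤ n := Finset.card_le_card hTS
    have hIsub : S.filter (fun p => p ∈ interior (convexHull ℝ (T : Set (ℝ × ℝ)))) ⊆ S \ T := by
      intro p hp
      rw [Finset.mem_sdiff]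
      exact ⟨Finset.filter_subset _ _ hp,
        fun hpT => (Finset.disjoint_left.1 (disjoint_TB hc3 hcp)) hpT hp⟩
    have hIle : iC T ≤ n - T.card := by
      rw [hiC]
      calc (S.filter (fun p => p ∈ interior (convexHull ℝ (T : Set (ℝ × ℝ))))).card
          ≤ (S \ T).card := Finset.card_le_card hIsub
        _ = n - T.card := by rw [Finset.card_sdiff_of_subset hTS]
    exact ⟨⟨hc3, hcle⟩, by omega⟩
  have step3 : ∑ pr ∈ (Finset.Icc 3 n) ×ˢ (Finset.range (n-2)),
      ∑ T ∈ Q.filter (fun T => (T.card, iC T) = pr), om^(2*T.card + iC T)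
      = ∑ T ∈ Q, om^(2*T.card + iC T) := Finset.sum_fiberwise_of_maps_to hmaps2 _
  have step4 : ∀ pr ∈ (Finset.Icc 3 n) ×ˢ (Finset.range (n-2)),
      ∑ T ∈ Q.filter (fun T => (T.card, iC T) = pr), om^(2*T.card + iC T)
      = om^(2*pr.1 + pr.2) * (X S pr.1 pr.2 : ℂ) := by
    intro pr hpr
    rw [Finset.mem_product, Finset.mem_Icc] at hpr
    have hfe : Q.filter (fun T => (T.card, iC T) = pr)
        = (Finset.powersetCard pr.1 S).filter (fun T => ConvexPos T ∧
            (S.filter (fun p => p ∈ interior (convexHull ℝ (T : Set (ℝ × ℝ))))).card = pr.2) := by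
      ext T
      rw [hQ]
      simp only [Finset.mem_filter, Finset.mem_powerset, Finset.mem_powersetCard, Prod.ext_iff]
      constructor
      · rintro ⟨⟨h1, h2, h3⟩, h4, h5⟩
        exact ⟨⟨h1, h4⟩, h2, h5⟩
      · rintro ⟨⟨h1, h4⟩, h2, h5⟩
        refine ⟨⟨h1, h2, ?_⟩, h4, h5⟩
        omega
    rw [hfe]
    have hconst : ∀ T ∈ (Finset.powersetCard pr.1 S).filter (fun T => ConvexPos T ∧
        (S.filter (fun p => p ∈ interior (convexHull ℝ (T : Set (ℝ × ℝ))))).card = pr.2),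
        om^(2*T.card + iC T) = om^(2*pr.1 + pr.2) := by
      intro T hT
      rw [Finset.mem_filter, Finset.mem_powersetCard] at hT
      rw [hT.1.2, show iC T = pr.2 from hT.2.2]
    rw [Finset.sum_congr rfl hconst, Finset.sum_const, nsmul_eq_mul, mul_comm]
    congr 1
  -- master complex identity
  have master : ∑ k ∈ Finset.Icc 3 n, ∑ l ∈ Finset.range (n-2), om^(2*k+l) * (X S k l : ℂ)
      = om^n - 1 - n*om^2 - (n.choose 2 : ℂ)*om^4 := by
    have hsp : ∑ pr ∈ (Finset.Icc 3 n) ×ˢ (Finset.range (n-2)),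
        om^(2*pr.1 + pr.2) * (X S pr.1 pr.2 : ℂ)
        = ∑ k ∈ Finset.Icc 3 n, ∑ l ∈ Finset.range (n-2), om^(2*k+l) * (X S k l : ℂ) := by
      rw [Finset.sum_product]
    rw [← hsp, ← Finset.sum_congr rfl step4, step3, ← master1, hP]
    exact master2 hn
  -- take real parts
  have hre : ∀ k l : ℕ, 2 * Real.cos ((2*(k:ℝ)+l) * π / 3) * (X S k l : ℝ)
      = (2 * (om^(2*k+l) * (X S k l : ℂ))).re := by
    intro k l
    have h1 : (om^(2*k+l)).re = Real.cos ((2*(k:ℝ)+l) * π / 3) := by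
      rw [omega_pow_re (2*k+l)]
      push_cast
      ring_nf
    simp only [Complex.mul_re, Complex.re_ofNat, Complex.im_ofNat, Complex.natCast_re,
      Complex.natCast_im, mul_zero, zero_mul, sub_zero, h1]
    ring
  have hLHS : ∑ k ∈ Finset.Icc 3 n, ∑ l ∈ Finset.range (n-2),
      2 * Real.cos ((2*(k:ℝ)+l) * π / 3) * (X S k l : ℝ)
      = (2 * (om^n - 1 - n*om^2 - (n.choose 2 : ℂ)*om^4)).re := by
    rw [← master]
    rw [Finset.mul_sum, Complex.re_sum]
    apply Finset.sum_congr rfl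
    intro k _
    rw [Finset.mul_sum, Complex.re_sum]
    apply Finset.sum_congr rfl
    intro l _
    exact hre k l
  rw [hLHS]
  -- numeric evaluation
  have h2re : (om^2).re = -(1/2) := by
    rw [omega_sq]
    simp [Complex.sub_re, omega_re]
    norm_num
  have h4re : (om^4).re = -(1/2) := by
    rw [omega_four]
    simp [Complex.neg_re, omega_re]
  have h2im : (om^2).im = om.im := by
    rw [omega_sq]
    simp [Complex.sub_im]
  have hnre := omega_pow_re n
  simp only [Complex.mul_re, Complex.re_ofNat, Complex.im_ofNat, Complex.sub_re, Complex.sub_im,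
    Complex.one_re, Complex.one_im, Complex.natCast_re, Complex.natCast_im, mul_zero, zero_mul,
    sub_zero, h2re, h4re, hnre]
  push_cast
  ring

end Main

end Stmt18Aux

open Real in
theorem stmt18 (S : Finset (ℝ × ℝ)) (hgp : GenPos S) (hn : 3 ≤ S.card) :
    ∑ k ∈ Finset.Icc 3 S.card, ∑ l ∈ Finset.range (S.card - 2),
      2 * Real.cos ((2 * k + l) * π / 3) * X S k l =
    (S.card.choose 2 : ℝ) + S.card - 2 + 2 * Real.cos (S.card * π / 3) := by
  exact Stmt18Aux.stmt18' S hgp hn
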